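/- Fixed-point of alternating closures: let R(C) denote the least regular cone containing C and T_L(C) = R(cp_L(C)). For any regular cone C ⊆ Q[X] (X finite) containing 1 and any polynomial lattice L, there exists n ≥ 0 such that T_L^n(C) is the least regular cone that contains C and is closed under cutting planes with respect to L. -/
import Mathlib


open MvPolynomial Pointwise

def IsCone {σ : Type} (C : Set (MvPolynomial σ ℚ)) : Prop :=
  (0 : MvPolynomial σ ℚ) ∈ C ∧ (∀ x ∈ C, ∀ y ∈ C, x + y ∈ C) ∧
    ∀ (a : ℚ), 0 ≤ a → ∀ x ∈ C, a • x ∈ C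

def unitsOf {σ : Type} (C : Set (MvPolynomial σ ℚ)) : Set (MvPolynomial σ ℚ) :=
  C ∩ (-C)

def IsRegularCone {σ : Type} (C : Set (MvPolynomial σ ℚ)) : Prop :=
  IsCone C ∧ (1 : MvPolynomial σ ℚ) ∈ C ∧
    ∃ I : Ideal (MvPolynomial σ ℚ), (I : Set (MvPolynomial σ ℚ)) = unitsOf C

/-- `D` is closed under cutting planes with respect to `L`. -/
def ClosedCP {σ : Type} (L D : Set (MvPolynomial σ ℚ)) : Prop :=
  ∀ (a b : ℤ), 0 < a → ∀ p ∈ L,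
    a • p + (b : MvPolynomial σ ℚ) ∈ D →
      p + ((⌊(b : ℚ) / (a : ℚ)⌋ : ℤ) : MvPolynomial σ ℚ) ∈ D

/-- `cp_L(C)`: the least cone containing `C` closed under cutting planes w.r.t. `L`. -/
def cpClosure {σ : Type} (L C : Set (MvPolynomial σ ℚ)) : Set (MvPolynomial σ ℚ) :=
  ⋂₀ {D | IsCone D ∧ C ⊆ D ∧ ClosedCP L D}

/-- `R(C)`: the least regular cone containing `C`. -/
def leastReg {σ : Type} (C : Set (MvPolynomial σ ℚ)) : Set (MvPolynomial σ ℚ) :=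
  ⋂₀ {D | IsRegularCone D ∧ C ⊆ D}

/-- The integer span of a set `G`. -/
def intSpan {σ : Type} (G : Set (MvPolynomial σ ℚ)) : Set (MvPolynomial σ ℚ) :=
  {q | ∃ (s : Finset (MvPolynomial σ ℚ)) (c : MvPolynomial σ ℚ → ℤ),
      (↑s : Set (MvPolynomial σ ℚ)) ⊆ G ∧ q = ∑ p ∈ s, c p • p}

/-- A polynomial lattice: the sum of an ideal and a finitely generated point lattice. -/
def IsPolyLattice {σ : Type} (L : Set (MvPolynomial σ ℚ)) : Prop :=
  ∃ (I : Ideal (MvPolynomial σ ℚ)) (G : Set (MvPolynomial σ ℚ)),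
    G.Finite ∧ L = (↑I : Set (MvPolynomial σ ℚ)) + intSpan G

section Aux

variable {σ : Type}

lemma unitsOf_mono {S T : Set (MvPolynomial σ ℚ)} (h : S ⊆ T) :
    unitsOf S ⊆ unitsOf T := by
  intro x hx
  exact ⟨h hx.1, Set.mem_neg.2 (h (Set.mem_neg.1 hx.2))⟩

lemma isCone_sInter {F : Set (Set (MvPolynomial σ ℚ))} (h : ∀ D ∈ F, IsCone D) :
    IsCone (⋂₀ F) := by
  refine ⟨?_, ?_, ?_⟩
  · exact Set.mem_sInter.2 fun D hD => (h D hD).1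
  · intro x hx y hy
    exact Set.mem_sInter.2 fun D hD =>
      (h D hD).2.1 x (Set.mem_sInter.1 hx D hD) y (Set.mem_sInter.1 hy D hD)
  · intro a ha x hx
    exact Set.mem_sInter.2 fun D hD => (h D hD).2.2 a ha x (Set.mem_sInter.1 hx D hD)

lemma isRegularCone_sInter {F : Set (Set (MvPolynomial σ ℚ))}
    (h : ∀ D ∈ F, IsRegularCone D) : IsRegularCone (⋂₀ F) := by
  refine ⟨isCone_sInter fun D hD => (h D hD).1,
    Set.mem_sInter.2 fun D hD => (h D hD).2.1, ?_⟩
  choose I hI using fun D : F => (h D D.2).2.2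
  refine ⟨⨅ D : F, I D, ?_⟩
  ext x
  constructor
  · intro hx
    rw [SetLike.mem_coe, Submodule.mem_iInf] at hx
    have h1 : ∀ D : F, x ∈ unitsOf (D : Set (MvPolynomial σ ℚ)) := fun D => by
      rw [← hI D]; exact hx D
    refine ⟨Set.mem_sInter.2 fun D hD => (h1 ⟨D, hD⟩).1, ?_⟩
    rw [Set.mem_neg]
    exact Set.mem_sInter.2 fun D hD => Set.mem_neg.1 (h1 ⟨D, hD⟩).2
  · intro hx
    rw [SetLike.mem_coe, Submodule.mem_iInf]
    intro D
    rw [← SetLike.mem_coe, hI D]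
    exact ⟨Set.mem_sInter.1 hx.1 D D.2,
      Set.mem_neg.2 (Set.mem_sInter.1 (Set.mem_neg.1 hx.2) D D.2)⟩

lemma cpClosure_isCone (L S : Set (MvPolynomial σ ℚ)) : IsCone (cpClosure L S) :=
  isCone_sInter fun _ hD => hD.1

lemma subset_cpClosure {L S : Set (MvPolynomial σ ℚ)} : S ⊆ cpClosure L S :=
  fun _ hx => Set.mem_sInter.2 fun _ hD => hD.2.1 hx

lemma cpClosure_closedCP (L S : Set (MvPolynomial σ ℚ)) :
    ClosedCP L (cpClosure L S) := by
  intro a b ha p hp hmem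
  exact Set.mem_sInter.2 fun D hD =>
    hD.2.2 a b ha p hp (Set.mem_sInter.1 hmem D hD)

lemma cpClosure_subset {L S D : Set (MvPolynomial σ ℚ)} (h1 : IsCone D)
    (h2 : S ⊆ D) (h3 : ClosedCP L D) : cpClosure L S ⊆ D :=
  Set.sInter_subset_of_mem ⟨h1, h2, h3⟩

lemma leastReg_regular (S : Set (MvPolynomial σ ℚ)) : IsRegularCone (leastReg S) :=
  isRegularCone_sInter fun _ hD => hD.1

lemma subset_leastReg {S : Set (MvPolynomial σ ℚ)} : S ⊆ leastReg S :=
  fun _ hx => Set.mem_sInter.2 fun _ hD => hD.2 hx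

lemma leastReg_subset {S D : Set (MvPolynomial σ ℚ)} (h1 : IsRegularCone D)
    (h2 : S ⊆ D) : leastReg S ⊆ D :=
  Set.sInter_subset_of_mem ⟨h1, h2⟩

lemma leastReg_eq_self {S : Set (MvPolynomial σ ℚ)} (h : IsRegularCone S) :
    leastReg S = S :=
  subset_antisymm (leastReg_subset h subset_rfl) subset_leastReg

end Aux

/-- fixed point of alternating closures: let `R(C)` be the least regular
cone containing `C` and `T_L(C) = R(cp_L(C))`.  For any regular cone `C ⊆ ℚ[X]` (`X`
finite, `1 ∈ C` since `C` is regular) and any polynomial lattice `L`, there is `n ≥ 0`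
such that `T_L^n(C)` is the least regular cone containing `C` that is closed under
cutting planes with respect to `L`. -/
theorem alternating_closures_fixed_point {σ : Type} [Fintype σ]
    (C L : Set (MvPolynomial σ ℚ)) (hC : IsRegularCone C) (hL : IsPolyLattice L) :
    ∃ n : ℕ,
      IsRegularCone ((fun S => leastReg (cpClosure L S))^[n] C) ∧
      C ⊆ (fun S => leastReg (cpClosure L S))^[n] C ∧
      ClosedCP L ((fun S => leastReg (cpClosure L S))^[n] C) ∧
      ∀ D : Set (MvPolynomial σ ℚ), IsRegularCone D → C ⊆ D → ClosedCP L D →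
        (fun S => leastReg (cpClosure L S))^[n] C ⊆ D := by
  classical
  set T : Set (MvPolynomial σ ℚ) → Set (MvPolynomial σ ℚ) :=
    fun S => leastReg (cpClosure L S) with hT
  have hreg : ∀ i, IsRegularCone (T^[i] C) := by
    intro i
    cases i with
    | zero => simpa using hC
    | succ k =>
      rw [Function.iterate_succ_apply']
      exact leastReg_regular _
  have hstep : ∀ S : Set (MvPolynomial σ ℚ), S ⊆ T S := fun S =>
    subset_cpClosure.trans subset_leastReg
  have hmono : Monotone fun i => T^[i] C := by
    apply monotone_nat_of_le_succ
    intro i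
    rw [Function.iterate_succ_apply']
    exact hstep _
  have hCsub : ∀ i, C ⊆ T^[i] C := fun i => by
    have := hmono (Nat.zero_le i)
    simpa using this
  choose I hIdef using fun i => (hreg i).2.2
  have hImono : Monotone I := by
    apply monotone_nat_of_le_succ
    intro i x hx
    have hx' : x ∈ unitsOf (T^[i] C) := by
      rw [← hIdef i]; exact hx
    have := unitsOf_mono (hmono (Nat.le_succ i)) hx'
    rw [← hIdef (i + 1)] at this
    exact this
  obtain ⟨n, hn⟩ :=
    monotone_stabilizes_iff_noetherian.mpr (inferInstance : IsNoetherian _ _)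
      ⟨I, hImono⟩
  have hstab : unitsOf (T^[n + 1] C) = unitsOf (T^[n] C) := by
    rw [← hIdef, ← hIdef]
    exact congrArg _ (hn (n + 1) (Nat.le_succ n)).symm
  set E := cpClosure L (T^[n] C) with hE
  have hEsub : E ⊆ T^[n + 1] C := by
    rw [Function.iterate_succ_apply']
    exact subset_leastReg
  have hEunits : unitsOf E = unitsOf (T^[n] C) :=
    subset_antisymm (hstab ▸ unitsOf_mono hEsub) (unitsOf_mono subset_cpClosure)
  have hEreg : IsRegularCone E := by
    refine ⟨cpClosure_isCone _ _, subset_cpClosure (hCsub n hC.2.1), ?_⟩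
    exact ⟨I n, by rw [hIdef n, hEunits]⟩
  have hfix : T^[n + 1] C = E := by
    rw [Function.iterate_succ_apply']
    exact leastReg_eq_self hEreg
  refine ⟨n + 1, ?_, hCsub (n + 1), ?_, ?_⟩
  · rw [hfix]; exact hEreg
  · rw [hfix]; exact cpClosure_closedCP _ _
  · intro D hD hCD hcp
    have hk : ∀ k, T^[k] C ⊆ D := by
      intro k
      induction k with
      | zero => simpa using hCD
      | succ k ih =>
        rw [Function.iterate_succ_apply']
        exact leastReg_subset hD (cpClosure_subset hD.1 ih hcp)
    exact hk (n + 1)
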